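/- Let A be a compact metric space and μ a Borel probability measure on [0,T] × A whose marginal on [0,T] is Lebesgue measure (a relaxed control). Then there exists a sequence of measurable functions u_n : [0,T] → A such that the measures δ_{u_n(t)}(da) dt converge to μ in the weak-* (stable) topology: for every continuous f : [0,T] × A → ℝ, ∫_0^T f(t, u_n(t)) dt → ∫_{[0,T]×A} f dμ. -/

import Mathlib

open MeasureTheory Filter Set Metric

section ChatteringAux

open scoped Classical in
/-- Index of the grid cell `[g k, g (k+1))` containing `t` (largest `k ≤ M` with `g k ≤ t`). -/
noncomputable def gridIdx (g : ℕ → ℝ) (M : ℕ) (t : ℝ) : ℕ :=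
  Nat.findGreatest (fun k => g k ≤ t) M

lemma gridIdx_le (g : ℕ → ℝ) (M : ℕ) (t : ℝ) : gridIdx g M t ≤ M :=
  Nat.findGreatest_le M

lemma gridIdx_eq (g : ℕ → ℝ) (M : ℕ) {k : ℕ} (hk : k ≤ M) {t : ℝ}
    (h1 : g k ≤ t) (h2 : t < g (k + 1))
    (hmono : ∀ k1 k2, k1 ≤ k2 → k2 ≤ M + 1 → g k1 ≤ g k2) :
    gridIdx g M t = k := by
  classical
  rw [gridIdx, Nat.findGreatest_eq_iff]
  refine ⟨hk, fun _ => h1, fun k' h1' h2' hP => ?_⟩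
  have hgk : g (k + 1) ≤ g k' := hmono _ _ h1' (le_trans h2' (Nat.le_succ M))
  linarith

lemma gridIdx_mem (g : ℕ → ℝ) (M : ℕ) {t : ℝ} (h0 : g 0 ≤ t) (hM : t < g (M + 1))
    (hmono : ∀ k1 k2, k1 ≤ k2 → k2 ≤ M + 1 → g k1 ≤ g k2) :
    g (gridIdx g M t) ≤ t ∧ t < g (gridIdx g M t + 1) := by
  classical
  constructor
  · unfold gridIdx
    exact Nat.findGreatest_spec (P := fun k => g k ≤ t) (Nat.zero_le M) h0
  · rcases eq_or_lt_of_le (gridIdx_le g M t) with h | h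
    · rw [h]; exact hM
    · have hng : ¬ g (gridIdx g M t + 1) ≤ t := by
        unfold gridIdx
        exact Nat.findGreatest_is_greatest (P := fun k => g k ≤ t)
          (Nat.lt_succ_self _) (by unfold gridIdx at h; omega)
      exact not_le.mp hng

lemma measurableSet_gridIdx_eq (g : ℕ → ℝ) (M k : ℕ) :
    MeasurableSet {t : ℝ | gridIdx g M t = k} := by
  classical
  by_cases hkM : k ≤ M
  · have hset : {t : ℝ | gridIdx g M t = k}
        = {t : ℝ | k ≠ 0 → g k ≤ t} ∩ ⋂ k' ∈ Finset.Ioc k M, {t : ℝ | t < g k'} := by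
      ext t
      simp only [mem_setOf_eq, mem_inter_iff, Set.mem_iInter, Finset.mem_Ioc, gridIdx,
        Nat.findGreatest_eq_iff]
      constructor
      · rintro ⟨-, h2, h3⟩
        exact ⟨h2, fun k' hk' => not_le.mp (h3 hk'.1 hk'.2)⟩
      · rintro ⟨h2, h3⟩
        exact ⟨hkM, h2, fun k' hlt hle hP => absurd hP (not_le.mpr (h3 k' ⟨hlt, hle⟩))⟩
    rw [hset]
    refine MeasurableSet.inter ?_ (MeasurableSet.biInter (Finset.Ioc k M).countable_toSet
      fun k' _ => measurableSet_Iio)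
    by_cases hk0 : k = 0
    · simp [hk0]
    · simp only [hk0, ne_eq, not_false_iff, true_implies]
      exact measurableSet_Ici
  · have hset : {t : ℝ | gridIdx g M t = k} = ∅ := by
      ext t
      simp only [mem_setOf_eq, mem_empty_iff_false, iff_false]
      intro h
      exact hkM (h ▸ gridIdx_le g M t)
    rw [hset]
    exact MeasurableSet.empty

/-- The chattering strict control. -/
noncomputable def ctrl {A : Type*} (L : ℝ) (N K : ℕ) (c : ℕ → ℕ → ℝ) (a : Fin K → A)
    (hK : 0 < K) (t : ℝ) : A :=
  a ⟨min (gridIdx (c (gridIdx (fun j => (j : ℝ) * L) (N - 1) t)) (K - 1)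
      (t - (gridIdx (fun j => (j : ℝ) * L) (N - 1) t : ℝ) * L)) (K - 1), by omega⟩

lemma ctrl_measurable {A : Type*} [MeasurableSpace A] (L : ℝ) (N K : ℕ) (hN : 0 < N)
    (c : ℕ → ℕ → ℝ) (a : Fin K → A) (hK : 0 < K) :
    Measurable (ctrl L N K c a hK) := by
  classical
  have hΦset : ∀ jv : ℕ, MeasurableSet {t : ℝ | gridIdx (fun j => (j : ℝ) * L) (N - 1) t = jv} :=
    fun jv => measurableSet_gridIdx_eq _ _ _
  set Ψ : ℝ → ℕ := fun t => gridIdx (c (gridIdx (fun j => (j : ℝ) * L) (N - 1) t)) (K - 1)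
      (t - (gridIdx (fun j => (j : ℝ) * L) (N - 1) t : ℝ) * L) with hΨdef
  have hΨ : Measurable Ψ := by
    apply measurable_to_countable'
    intro iv
    have hpre : Ψ ⁻¹' {iv} = ⋃ jv ∈ Finset.range N,
        ({t : ℝ | gridIdx (fun j => (j : ℝ) * L) (N - 1) t = jv} ∩
          (fun t : ℝ => t - (jv : ℝ) * L) ⁻¹' {s : ℝ | gridIdx (c jv) (K - 1) s = iv}) := by
      ext t
      simp only [Set.mem_preimage, Set.mem_singleton_iff, Set.mem_iUnion, Finset.mem_range,
        Set.mem_inter_iff, Set.mem_setOf_eq, hΨdef]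
      constructor
      · intro h
        refine ⟨gridIdx (fun j => (j : ℝ) * L) (N - 1) t, ?_, rfl, h⟩
        have := gridIdx_le (fun j => (j : ℝ) * L) (N - 1) t
        omega
      · rintro ⟨jv, hjv, hΦt, h⟩
        rw [hΦt]
        exact h
    rw [hpre]
    exact MeasurableSet.biUnion (Finset.range N).countable_toSet fun jv _ =>
      ((hΦset jv).inter ((measurable_id.sub_const _) (measurableSet_gridIdx_eq _ _ _)))
  have hco : ctrl L N K c a hK = (fun m : ℕ => a ⟨min m (K - 1), by omega⟩) ∘ Ψ := rfl
  rw [hco]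
  exact measurable_from_top.comp hΨ

lemma ctrl_eq_on {A : Type*} {L : ℝ} (hL : 0 < L) {N K : ℕ} (hN : 0 < N) (hK : 0 < K)
    {c : ℕ → ℕ → ℝ} (a : Fin K → A)
    (hc0 : ∀ j, c j 0 = 0) (hcmono : ∀ j, Monotone (c j)) (hcK : ∀ j, j < N → c j K = L)
    {j i : ℕ} (hj : j < N) (hi : i < K) {t : ℝ}
    (h1 : (j : ℝ) * L + c j i ≤ t) (h2 : t < (j : ℝ) * L + c j (i + 1)) :
    ctrl L N K c a hK t = a ⟨i, hi⟩ := by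
  have hci : 0 ≤ c j i := hc0 j ▸ hcmono j (Nat.zero_le i)
  have hcip : c j (i + 1) ≤ L := hcK j hj ▸ hcmono j (by omega : i + 1 ≤ K)
  have hgm : ∀ k1 k2 : ℕ, k1 ≤ k2 → k2 ≤ (N - 1) + 1 → (fun j' => (j' : ℝ) * L) k1 ≤
      (fun j' => (j' : ℝ) * L) k2 := by
    intro k1 k2 hk _
    exact mul_le_mul_of_nonneg_right (by exact_mod_cast hk) hL.le
  have hjt : gridIdx (fun j' => (j' : ℝ) * L) (N - 1) t = j := by
    apply gridIdx_eq _ _ (by omega) _ _ hgm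
    · simp only
      linarith
    · simp only
      push_cast
      linarith
  have hit : gridIdx (c j) (K - 1) (t - (j : ℝ) * L) = i := by
    apply gridIdx_eq _ _ (by omega)
    · linarith
    · linarith
    · intro k1 k2 hk _
      exact hcmono j hk
  show a _ = a ⟨i, hi⟩
  apply congrArg a
  apply Fin.ext
  simp only [hjt, hit]
  omega

lemma exists_partition {A : Type*} [MetricSpace A] [CompactSpace A] [Nonempty A]
    [MeasurableSpace A] [BorelSpace A] {r : ℝ} (hr : 0 < r) :
    ∃ (K : ℕ) (a : Fin K → A) (S : Fin K → Set A), 0 < K ∧ (∀ i, MeasurableSet (S i)) ∧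
      (Pairwise (Function.onFun Disjoint S)) ∧ (⋃ i, S i) = Set.univ ∧
      ∀ i, S i ⊆ Metric.ball (a i) r := by
  classical
  obtain ⟨s, -, hsfin, hcov⟩ := finite_cover_balls_of_compact (isCompact_univ (X := A)) hr
  set F := hsfin.toFinset with hF
  set K := F.card with hKdef
  set e := F.equivFin with he
  set a : Fin K → A := fun i => (e.symm i : A) with ha
  have hcover : ∀ x : A, ∃ i : Fin K, x ∈ Metric.ball (a i) r := by
    intro x
    have hx := hcov (mem_univ x)
    simp only [Set.mem_iUnion] at hx
    obtain ⟨y, hy, hxy⟩ := hx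
    refine ⟨e ⟨y, hsfin.mem_toFinset.mpr hy⟩, ?_⟩
    simpa [ha, Equiv.symm_apply_apply] using hxy
  have hK : 0 < K := by
    obtain ⟨i, -⟩ := hcover (Classical.arbitrary A)
    exact i.pos
  set S : Fin K → Set A := fun i =>
    Metric.ball (a i) r \ ⋃ (i' : Fin K) (_ : (i' : ℕ) < (i : ℕ)), Metric.ball (a i') r with hS
  refine ⟨K, a, S, hK, ?_, ?_, ?_, fun i => diff_subset⟩
  · intro i
    exact (measurableSet_ball).diff
      (MeasurableSet.iUnion fun i' => MeasurableSet.iUnion fun _ => measurableSet_ball)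
  · have hdis : ∀ i i' : Fin K, (i : ℕ) < (i' : ℕ) → Disjoint (S i) (S i') := by
      intro i i' h
      rw [Set.disjoint_left]
      intro x hx hx'
      exact hx'.2 (Set.mem_iUnion.mpr ⟨i, Set.mem_iUnion.mpr ⟨h, hx.1⟩⟩)
    intro i i' hne
    rcases lt_or_gt_of_ne (fun h => hne (Fin.ext h)) with h | h
    · exact hdis i i' h
    · exact (hdis i' i h).symm
  · ext x
    simp only [Set.mem_iUnion, Set.mem_univ, iff_true]
    have hne : (Finset.univ.filter (fun i : Fin K => x ∈ Metric.ball (a i) r)).Nonempty := by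
      obtain ⟨i, hi⟩ := hcover x
      exact ⟨i, Finset.mem_filter.mpr ⟨Finset.mem_univ i, hi⟩⟩
    set i₀ := (Finset.univ.filter (fun i : Fin K => x ∈ Metric.ball (a i) r)).min' hne with hi₀
    refine ⟨i₀, (Finset.mem_filter.mp ((Finset.univ.filter _).min'_mem hne)).2, ?_⟩
    intro hmem
    simp only [Set.mem_iUnion] at hmem
    obtain ⟨i', hlt, hball⟩ := hmem
    have : i₀ ≤ i' := Finset.min'_le _ _ (Finset.mem_filter.mpr ⟨Finset.mem_univ i', hball⟩)
    rw [Fin.le_def] at this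
    omega

lemma exists_ctrl {A : Type*} [MetricSpace A] [CompactSpace A] [Nonempty A]
    [MeasurableSpace A] [BorelSpace A]
    (T : ℝ) (hT : 0 < T) (μ : Measure (ℝ × A))
    (hmarg : μ.map Prod.fst = volume.restrict (Set.Icc 0 T)) (n : ℕ) :
    ∃ u : ℝ → A, Measurable u ∧ ∀ (f : ℝ × A → ℝ), Continuous f → ∀ ε : ℝ, 0 < ε →
      (∀ p ∈ Set.Icc (0:ℝ) T ×ˢ (Set.univ : Set A),
        ∀ q ∈ Set.Icc (0:ℝ) T ×ˢ (Set.univ : Set A),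
        dist p q ≤ max (T/(n+1)) (1/(n+1)) → |f p - f q| ≤ ε) →
      |(∫ t in (0:ℝ)..T, f (t, u t)) - ∫ p, f p ∂μ| ≤ 2*T*ε := by
  classical
  set N : ℕ := n + 1 with hNdef
  have hN : 0 < N := Nat.succ_pos n
  have hNR : (0:ℝ) < (N:ℝ) := by exact_mod_cast hN
  set L : ℝ := T / N with hLdef
  have hL : 0 < L := div_pos hT hNR
  have hNL : (N:ℝ) * L = T := by
    rw [hLdef]; field_simp
  obtain ⟨K, a, S, hK, hSmeas, hSdis, hSuniv, hSball⟩ :=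
    exists_partition (A := A) (r := 1/(n+1)) (by positivity)
  -- basic measure facts
  have hμ : ∀ s : Set ℝ, MeasurableSet s →
      μ (s ×ˢ (Set.univ : Set A)) = volume.restrict (Set.Icc 0 T) s := by
    intro s hs
    have hpre : s ×ˢ (Set.univ : Set A) = Prod.fst ⁻¹' s := by
      ext p; simp [Set.mem_prod]
    rw [hpre, ← Measure.map_apply measurable_fst hs, hmarg]
  haveI : IsFiniteMeasure μ := by
    constructor
    have huniv : (Set.univ : Set (ℝ × A)) = (Set.univ : Set ℝ) ×ˢ (Set.univ : Set A) := by
      simp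
    rw [huniv, hμ _ MeasurableSet.univ, Measure.restrict_apply MeasurableSet.univ]
    simp only [Set.univ_inter, Real.volume_Icc]
    exact ENNReal.ofReal_lt_top
  -- the time intervals
  set I : ℕ → Set ℝ := fun j => Set.Ico ((j:ℝ) * L) (((j:ℝ) + 1) * L) with hIdef
  have hIsub : ∀ j : ℕ, j < N → I j ⊆ Set.Icc 0 T := by
    intro j hj t ht
    have hj1 : (j:ℝ) + 1 ≤ (N:ℝ) := by exact_mod_cast hj
    have h0 : (0:ℝ) ≤ (j:ℝ) * L := mul_nonneg (Nat.cast_nonneg j) hL.le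
    have hub : ((j:ℝ) + 1) * L ≤ T := by
      rw [← hNL]; exact mul_le_mul_of_nonneg_right hj1 hL.le
    exact ⟨le_trans h0 ht.1, le_trans ht.2.le hub⟩
  have hμI : ∀ j : ℕ, j < N → μ (I j ×ˢ (Set.univ : Set A)) = ENNReal.ofReal L := by
    intro j hj
    rw [hμ _ measurableSet_Ico, Measure.restrict_apply measurableSet_Ico,
      Set.inter_eq_self_of_subset_left (hIsub j hj), Real.volume_Ico]
    congr 1; ring
  -- masses and prefix sums
  set m : ℕ → Fin K → ℝ := fun j i => (μ ((I j) ×ˢ S i)).toReal with hmdef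
  have hm0 : ∀ j i, 0 ≤ m j i := fun j i => ENNReal.toReal_nonneg
  set c : ℕ → ℕ → ℝ := fun j i => ∑ i' : Fin K, if (i' : ℕ) < i then m j i' else 0 with hcdef
  have hc0 : ∀ j, c j 0 = 0 := by intro j; simp [hcdef]
  have hcmono : ∀ j, Monotone (c j) := by
    intro j i1 i2 h
    apply Finset.sum_le_sum
    intro i' _
    by_cases h1 : (i' : ℕ) < i1
    · rw [if_pos h1, if_pos (lt_of_lt_of_le h1 h)]
    · rw [if_neg h1]
      split_ifs with h2
      · exact hm0 j i'
      · exact le_rfl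
  have hsumK : ∀ j : ℕ, j < N → ∑ i : Fin K, m j i = L := by
    intro j hj
    have htsum : ∑ i : Fin K, μ (I j ×ˢ S i) = ENNReal.ofReal L := by
      rw [← hμI j hj]
      have : I j ×ˢ (Set.univ : Set A) = ⋃ i : Fin K, I j ×ˢ S i := by
        rw [← hSuniv, Set.prod_iUnion]
      rw [this, measure_iUnion ?_ (fun i => measurableSet_Ico.prod (hSmeas i)), tsum_fintype]
      intro i i' hne
      simp only [Function.onFun]
      rw [Set.disjoint_left]
      rintro ⟨t, x⟩ ⟨-, hx⟩ ⟨-, hx'⟩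
      exact Set.disjoint_left.mp (hSdis hne) hx hx'
    have := congrArg ENNReal.toReal htsum
    rw [ENNReal.toReal_sum (fun i _ => measure_ne_top μ _), ENNReal.toReal_ofReal hL.le] at this
    exact this
  have hcK : ∀ j : ℕ, j < N → c j K = L := by
    intro j hj
    have : c j K = ∑ i : Fin K, m j i :=
      Finset.sum_congr rfl (fun i _ => if_pos i.isLt)
    rw [this, hsumK j hj]
  have hstep : ∀ (j : ℕ) (i : Fin K), c j ((i : ℕ) + 1) - c j (i : ℕ) = m j i := by
    intro j i
    have : c j ((i : ℕ) + 1) - c j (i : ℕ)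
        = ∑ i' : Fin K, if i' = i then m j i' else 0 := by
      rw [hcdef]
      simp only
      rw [← Finset.sum_sub_distrib]
      apply Finset.sum_congr rfl
      intro i' _
      rcases lt_trichotomy (i' : ℕ) (i : ℕ) with h | h | h
      · rw [if_pos (by omega), if_pos h, if_neg (by intro he; rw [he] at h; omega), sub_self]
      · rw [if_pos (by omega), if_neg (by omega), if_pos (Fin.ext h), sub_zero]
      · rw [if_neg (by omega), if_neg (by omega), if_neg (by intro he; rw [he] at h; omega),
          sub_self]
    rw [this, Finset.sum_ite_eq' Finset.univ i (fun i' => m j i'), if_pos (Finset.mem_univ i)]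
  -- the control
  set u : ℝ → A := ctrl L N K c a hK with hudef
  refine ⟨u, ctrl_measurable L N K hN c a hK, ?_⟩
  intro f hf ε hε hmod
  -- the pieces of [0,T)
  set E : Fin N × Fin K → Set ℝ := fun q =>
    Set.Ico (((q.1 : ℕ) : ℝ) * L + c (q.1 : ℕ) (q.2 : ℕ))
      (((q.1 : ℕ) : ℝ) * L + c (q.1 : ℕ) ((q.2 : ℕ) + 1)) with hEdef
  have hEvol : ∀ q : Fin N × Fin K, volume (E q) = ENNReal.ofReal (m (q.1 : ℕ) q.2) := by
    intro q
    rw [hEdef]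
    simp only
    rw [Real.volume_Ico]
    congr 1
    have := hstep (q.1 : ℕ) q.2
    ring_nf
    ring_nf at this
    linarith
  have hEIsub : ∀ q : Fin N × Fin K, E q ⊆ I (q.1 : ℕ) := by
    intro q
    apply Set.Ico_subset_Ico
    · have : 0 ≤ c (q.1 : ℕ) (q.2 : ℕ) := hc0 _ ▸ hcmono _ (Nat.zero_le _)
      linarith
    · have : c (q.1 : ℕ) ((q.2 : ℕ) + 1) ≤ L :=
        hcK _ q.1.isLt ▸ hcmono _ (by exact_mod_cast q.2.isLt : (q.2 : ℕ) + 1 ≤ K)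
      linarith
  have hIdisj : ∀ j j' : ℕ, j ≠ j' → Disjoint (I j) (I j') := by
    intro j j' hne
    rw [Set.disjoint_left]
    intro x hx hx'
    rcases lt_or_gt_of_ne hne with h | h
    · have h1 : (j:ℝ) + 1 ≤ (j':ℝ) := by exact_mod_cast h
      have := mul_le_mul_of_nonneg_right h1 hL.le
      rw [hIdef] at hx hx'
      simp only [Set.mem_Ico] at hx hx'
      linarith
    · have h1 : (j':ℝ) + 1 ≤ (j:ℝ) := by exact_mod_cast h
      have := mul_le_mul_of_nonneg_right h1 hL.le
      rw [hIdef] at hx hx'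
      simp only [Set.mem_Ico] at hx hx'
      linarith
  have hEdisj : Pairwise (Function.onFun Disjoint E) := by
    intro q q' hne
    by_cases hj : q.1 = q'.1
    · have hine : (q.2 : ℕ) ≠ (q'.2 : ℕ) := by
        intro h
        exact hne (Prod.ext hj (Fin.ext h))
      rw [Function.onFun, Set.disjoint_left]
      intro x hx hx'
      rw [hEdef] at hx hx'
      simp only [Set.mem_Ico] at hx hx'
      rw [← hj] at hx'
      rcases lt_or_gt_of_ne hine with h | h
      · have : c (q.1 : ℕ) ((q.2 : ℕ) + 1) ≤ c (q.1 : ℕ) (q'.2 : ℕ) := hcmono _ (by omega)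
        linarith
      · have : c (q.1 : ℕ) ((q'.2 : ℕ) + 1) ≤ c (q.1 : ℕ) (q.2 : ℕ) := hcmono _ (by omega)
        linarith
    · exact Set.disjoint_of_subset (hEIsub q) (hEIsub q')
        (hIdisj _ _ (fun h => hj (Fin.ext h)))
  have hEmeas : ∀ q : Fin N × Fin K, MeasurableSet (E q) := fun q => measurableSet_Ico
  -- union of pieces is [0,T)
  have hgm : ∀ k1 k2 : ℕ, k1 ≤ k2 → k2 ≤ (N - 1) + 1 →
      (fun j' : ℕ => (j' : ℝ) * L) k1 ≤ (fun j' : ℕ => (j' : ℝ) * L) k2 := by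
    intro k1 k2 hk _
    exact mul_le_mul_of_nonneg_right (by exact_mod_cast hk) hL.le
  have htimeloc : ∀ t : ℝ, t ∈ Set.Ico (0:ℝ) T → ∃ j : ℕ, j < N ∧
      (j:ℝ) * L ≤ t ∧ t < ((j:ℝ) + 1) * L := by
    intro t ht
    have h0 : (fun j' : ℕ => (j' : ℝ) * L) 0 ≤ t := by simpa using ht.1
    have hMn : t < (fun j' : ℕ => (j' : ℝ) * L) ((N - 1) + 1) := by
      have : (N - 1) + 1 = N := by omega
      rw [this]
      simp only
      rw [hNL]
      exact ht.2
    obtain ⟨hle, hlt⟩ := gridIdx_mem _ _ h0 hMn hgm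
    refine ⟨gridIdx (fun j' : ℕ => (j' : ℝ) * L) (N - 1) t, by
      have := gridIdx_le (fun j' : ℕ => (j' : ℝ) * L) (N - 1) t; omega, hle, ?_⟩
    simpa [Nat.cast_add, Nat.cast_one] using hlt
  have hEunion : (⋃ q : Fin N × Fin K, E q) = Set.Ico 0 T := by
    ext t
    simp only [Set.mem_iUnion]
    constructor
    · rintro ⟨q, hq⟩
      have h1 := hEIsub q hq
      have h2 := hIsub (q.1 : ℕ) q.1.isLt h1
      rw [hIdef] at h1
      simp only [Set.mem_Ico] at h1 ⊢
      have hj1 : ((q.1 : ℕ) : ℝ) + 1 ≤ (N:ℝ) := by exact_mod_cast q.1.isLt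
      constructor
      · exact h2.1
      · calc t < (((q.1 : ℕ) : ℝ) + 1) * L := h1.2
          _ ≤ (N:ℝ) * L := mul_le_mul_of_nonneg_right hj1 hL.le
          _ = T := hNL
    · intro ht
      obtain ⟨j, hjN, hj1, hj2⟩ := htimeloc t ht
      -- now find i
      have hi0 : c j 0 ≤ t - (j:ℝ) * L := by rw [hc0 j]; linarith
      have hiM : t - (j:ℝ) * L < c j ((K - 1) + 1) := by
        have hKK : (K - 1) + 1 = K := by omega
        rw [hKK, hcK j hjN]
        linarith
      obtain ⟨hle, hlt⟩ := gridIdx_mem (c j) (K - 1) hi0 hiM (fun k1 k2 hk _ => hcmono j hk)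
      set i := gridIdx (c j) (K - 1) (t - (j:ℝ) * L) with hidef
      have hiK : i < K := by
        have := gridIdx_le (c j) (K - 1) (t - (j:ℝ) * L)
        omega
      refine ⟨(⟨j, hjN⟩, ⟨i, hiK⟩), ?_⟩
      rw [hEdef]
      simp only [Set.mem_Ico]
      constructor <;> linarith
  -- integrability of f with respect to μ
  have hres : μ.restrict (Set.Ico 0 T ×ˢ (Set.univ : Set A)) = μ := by
    have hcompl : μ ((Set.Ico 0 T ×ˢ (Set.univ : Set A))ᶜ) = 0 := by
      have hcc : (Set.Ico 0 T ×ˢ (Set.univ : Set A))ᶜ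
          = (Set.Ico (0:ℝ) T)ᶜ ×ˢ (Set.univ : Set A) := by
        ext p; simp [Set.mem_prod]
      rw [hcc, hμ _ measurableSet_Ico.compl, Measure.restrict_apply measurableSet_Ico.compl]
      have : (Set.Ico (0:ℝ) T)ᶜ ∩ Set.Icc 0 T = {T} := by
        ext x
        simp only [Set.mem_inter_iff, Set.mem_compl_iff, Set.mem_Ico, Set.mem_Icc,
          Set.mem_singleton_iff, not_and, not_lt]
        constructor
        · rintro ⟨h1, h2, h3⟩
          exact le_antisymm h3 (h1 h2)
        · rintro rfl
          exact ⟨fun _ => le_rfl, hT.le, le_rfl⟩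
      rw [this, Real.volume_singleton]
    rw [Measure.restrict_congr_set (ae_eq_univ.mpr hcompl), Measure.restrict_univ]
  have hfint : Integrable f μ := by
    have hcpt : IsCompact (Set.Icc (0:ℝ) T ×ˢ (Set.univ : Set A)) :=
      isCompact_Icc.prod isCompact_univ
    have h1 : IntegrableOn f (Set.Icc (0:ℝ) T ×ˢ (Set.univ : Set A)) μ :=
      hf.continuousOn.integrableOn_compact hcpt
    have h2 : IntegrableOn f (Set.Ico (0:ℝ) T ×ˢ (Set.univ : Set A)) μ :=
      h1.mono_set (Set.prod_mono Set.Ico_subset_Icc_self subset_rfl)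
    rw [IntegrableOn, hres] at h2
    exact h2
  -- continuity of slices
  have hcont_i : ∀ q : Fin N × Fin K, Continuous (fun t : ℝ => f (t, a q.2)) :=
    fun q => hf.comp (continuous_id.prodMk continuous_const)
  have huEq : ∀ q : Fin N × Fin K,
      Set.EqOn (fun t => f (t, u t)) (fun t => f (t, a q.2)) (E q) := by
    intro q t ht
    rw [hEdef] at ht
    simp only [Set.mem_Ico] at ht
    have hc := ctrl_eq_on hL hN hK a hc0 hcmono hcK q.1.isLt q.2.isLt ht.1 ht.2
    simp only [hudef, hc, Fin.eta]
  have hintE : ∀ q : Fin N × Fin K, IntegrableOn (fun t => f (t, u t)) (E q) volume := by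
    intro q
    rw [integrableOn_congr_fun (huEq q) (hEmeas q)]
    have hsub : E q ⊆ Set.Icc (((q.1 : ℕ) : ℝ) * L + c (q.1 : ℕ) (q.2 : ℕ))
        (((q.1 : ℕ) : ℝ) * L + c (q.1 : ℕ) ((q.2 : ℕ) + 1)) := by
      rw [hEdef]
      exact Set.Ico_subset_Icc_self
    exact ((hcont_i q).integrableOn_Icc).mono_set hsub
  have hLHS : (∫ t in (0:ℝ)..T, f (t, u t))
      = ∑ q : Fin N × Fin K, ∫ t in E q, f (t, a q.2) := by
    rw [intervalIntegral.integral_of_le hT.le, MeasureTheory.integral_Ioc_eq_integral_Ioo,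
      ← MeasureTheory.integral_Ico_eq_integral_Ioo, ← hEunion,
      integral_iUnion_fintype hEmeas hEdisj hintE]
    exact Finset.sum_congr rfl fun q _ => setIntegral_congr_fun (hEmeas q) (huEq q)
  -- RHS decomposition
  have hPmeas : ∀ q : Fin N × Fin K, MeasurableSet (I (q.1 : ℕ) ×ˢ S q.2) :=
    fun q => measurableSet_Ico.prod (hSmeas q.2)
  have hPdisj : Pairwise (Function.onFun Disjoint
      (fun q : Fin N × Fin K => I (q.1 : ℕ) ×ˢ S q.2)) := by
    intro q q' hne
    simp only [Function.onFun]
    by_cases hj : q.1 = q'.1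
    · have hne2 : q.2 ≠ q'.2 := fun h => hne (Prod.ext hj h)
      rw [Set.disjoint_left]
      rintro ⟨t, x⟩ ⟨-, hx⟩ ⟨-, hx'⟩
      exact Set.disjoint_left.mp (hSdis hne2) hx hx'
    · rw [Set.disjoint_left]
      rintro ⟨t, x⟩ ⟨ht, -⟩ ⟨ht', -⟩
      exact Set.disjoint_left.mp (hIdisj _ _ (fun h => hj (Fin.ext h))) ht ht'
  have hIsubIco : ∀ j : ℕ, j < N → I j ⊆ Set.Ico 0 T := by
    intro j hj t ht
    rw [hIdef] at ht
    simp only [Set.mem_Ico] at ht ⊢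
    have hj1 : (j:ℝ) + 1 ≤ (N:ℝ) := by exact_mod_cast hj
    have h0 : (0:ℝ) ≤ (j:ℝ) * L := mul_nonneg (Nat.cast_nonneg j) hL.le
    refine ⟨le_trans h0 ht.1, ?_⟩
    calc t < ((j:ℝ) + 1) * L := ht.2
      _ ≤ (N:ℝ) * L := mul_le_mul_of_nonneg_right hj1 hL.le
      _ = T := hNL
  have hPunion : (⋃ q : Fin N × Fin K, I (q.1 : ℕ) ×ˢ S q.2)
      = Set.Ico 0 T ×ˢ (Set.univ : Set A) := by
    ext p
    simp only [Set.mem_iUnion, Set.mem_prod, Set.mem_univ, and_true]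
    constructor
    · rintro ⟨q, hq⟩
      exact hIsubIco _ q.1.isLt hq.1
    · intro hp
      obtain ⟨j, hjN, hj1, hj2⟩ := htimeloc p.1 hp
      have hx : p.2 ∈ ⋃ i, S i := hSuniv ▸ Set.mem_univ p.2
      obtain ⟨i, hi⟩ := Set.mem_iUnion.mp hx
      refine ⟨(⟨j, hjN⟩, i), ?_, hi⟩
      rw [hIdef]
      exact ⟨hj1, hj2⟩
  have hRHS : (∫ p, f p ∂μ)
      = ∑ q : Fin N × Fin K, ∫ p in I (q.1 : ℕ) ×ˢ S q.2, f p ∂μ := by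
    conv_lhs => rw [← hres]
    rw [show μ.restrict (Set.Ico 0 T ×ˢ (Set.univ : Set A))
        = μ.restrict (⋃ q : Fin N × Fin K, I (q.1 : ℕ) ×ˢ S q.2) by rw [hPunion]]
    exact integral_iUnion_fintype hPmeas hPdisj (fun q => hfint.integrableOn)
  -- termwise estimate
  have hLN : L = T / ((n:ℝ) + 1) := by
    rw [hLdef, hNdef]
    push_cast
    ring
  have hterm : ∀ q : Fin N × Fin K,
      |(∫ t in E q, f (t, a q.2)) - ∫ p in I (q.1 : ℕ) ×ˢ S q.2, f p ∂μ|
        ≤ 2 * ε * m (q.1 : ℕ) q.2 := by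
    intro q
    have hjN : (q.1 : ℕ) < N := q.1.isLt
    have hjL0 : 0 ≤ ((q.1 : ℕ) : ℝ) * L := mul_nonneg (Nat.cast_nonneg _) hL.le
    have hjLT : ((q.1 : ℕ) : ℝ) * L ≤ T := by
      have hcast : ((q.1 : ℕ) : ℝ) ≤ (N : ℝ) := by exact_mod_cast hjN.le
      calc ((q.1 : ℕ) : ℝ) * L ≤ (N:ℝ) * L := mul_le_mul_of_nonneg_right hcast hL.le
        _ = T := hNL
    have hptmem : ((((q.1 : ℕ) : ℝ) * L, a q.2) : ℝ × A)
        ∈ Set.Icc (0:ℝ) T ×ˢ (Set.univ : Set A) := ⟨⟨hjL0, hjLT⟩, trivial⟩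
    have hIdist : ∀ t ∈ I (q.1 : ℕ), |t - ((q.1 : ℕ) : ℝ) * L| ≤ T / ((n:ℝ) + 1) := by
      intro t ht
      rw [hIdef] at ht
      simp only [Set.mem_Ico] at ht
      rw [abs_of_nonneg (by linarith)]
      rw [← hLN]
      linarith
    -- part A: time integral piece
    have hintA : IntegrableOn (fun t => f (t, a q.2)) (E q) volume := by
      have hsub : E q ⊆ Set.Icc (((q.1 : ℕ) : ℝ) * L + c (q.1 : ℕ) (q.2 : ℕ))
          (((q.1 : ℕ) : ℝ) * L + c (q.1 : ℕ) ((q.2 : ℕ) + 1)) := by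
        rw [hEdef]
        exact Set.Ico_subset_Icc_self
      exact ((hcont_i q).integrableOn_Icc).mono_set hsub
    have hvolE : volume (E q) < ⊤ := by
      rw [hEvol q]
      exact ENNReal.ofReal_lt_top
    have hvolEtoReal : (volume (E q)).toReal = m (q.1 : ℕ) q.2 := by
      rw [hEvol q, ENNReal.toReal_ofReal (hm0 _ _)]
    have hconstE : (∫ _ in E q, f ((((q.1 : ℕ) : ℝ) * L, a q.2)))
        = m (q.1 : ℕ) q.2 * f ((((q.1 : ℕ) : ℝ) * L, a q.2)) := by
      rw [setIntegral_const, measureReal_def, hvolEtoReal, smul_eq_mul]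
    have hsubA : (∫ t in E q, f (t, a q.2))
          - m (q.1 : ℕ) q.2 * f ((((q.1 : ℕ) : ℝ) * L, a q.2))
        = ∫ t in E q, (f (t, a q.2) - f ((((q.1 : ℕ) : ℝ) * L, a q.2))) := by
      rw [← hconstE, ← integral_sub hintA (integrableOn_const hvolE.ne)]
    have hboundA : |(∫ t in E q, f (t, a q.2))
          - m (q.1 : ℕ) q.2 * f ((((q.1 : ℕ) : ℝ) * L, a q.2))| ≤ ε * m (q.1 : ℕ) q.2 := by
      rw [hsubA, ← Real.norm_eq_abs, ← hvolEtoReal]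
      apply norm_setIntegral_le_of_norm_le_const hvolE
      intro t ht
      rw [Real.norm_eq_abs]
      have htI : t ∈ I (q.1 : ℕ) := hEIsub q ht
      apply hmod _ ⟨hIsub _ hjN htI, trivial⟩ _ hptmem
      rw [Prod.dist_eq]
      apply max_le
      · exact le_trans (by rw [Real.dist_eq]; exact hIdist t htI) (le_max_left _ _)
      · have : dist ((t, a q.2) : ℝ × A).2 ((((q.1 : ℕ) : ℝ) * L, a q.2) : ℝ × A).2 = 0 :=
          dist_self _
        rw [this]
        positivity
    -- part B: measure integral piece
    have hμP : μ (I (q.1 : ℕ) ×ˢ S q.2) < ⊤ := measure_lt_top μ _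
    have hμPtoReal : (μ (I (q.1 : ℕ) ×ˢ S q.2)).toReal = m (q.1 : ℕ) q.2 := rfl
    have hconstB : (∫ _ in I (q.1 : ℕ) ×ˢ S q.2, f ((((q.1 : ℕ) : ℝ) * L, a q.2)) ∂μ)
        = m (q.1 : ℕ) q.2 * f ((((q.1 : ℕ) : ℝ) * L, a q.2)) := by
      rw [setIntegral_const, measureReal_def, hμPtoReal, smul_eq_mul]
    have hsubB : (∫ p in I (q.1 : ℕ) ×ˢ S q.2, f p ∂μ)
          - m (q.1 : ℕ) q.2 * f ((((q.1 : ℕ) : ℝ) * L, a q.2))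
        = ∫ p in I (q.1 : ℕ) ×ˢ S q.2,
            (f p - f ((((q.1 : ℕ) : ℝ) * L, a q.2))) ∂μ := by
      rw [← hconstB, ← integral_sub hfint.integrableOn (integrableOn_const hμP.ne)]
    have hboundB : |(∫ p in I (q.1 : ℕ) ×ˢ S q.2, f p ∂μ)
          - m (q.1 : ℕ) q.2 * f ((((q.1 : ℕ) : ℝ) * L, a q.2))| ≤ ε * m (q.1 : ℕ) q.2 := by
      rw [hsubB, ← Real.norm_eq_abs, ← hμPtoReal]
      apply norm_setIntegral_le_of_norm_le_const hμP
      rintro ⟨t, x⟩ ⟨htI, hxS⟩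
      rw [Real.norm_eq_abs]
      apply hmod _ ⟨hIsub _ hjN htI, trivial⟩ _ hptmem
      rw [Prod.dist_eq]
      apply max_le
      · exact le_trans (by rw [Real.dist_eq]; exact hIdist t htI) (le_max_left _ _)
      · have hd : dist x (a q.2) < 1 / ((n:ℝ) + 1) := mem_ball.mp (hSball q.2 hxS)
        exact le_trans hd.le (le_max_right _ _)
    calc |(∫ t in E q, f (t, a q.2)) - ∫ p in I (q.1 : ℕ) ×ˢ S q.2, f p ∂μ|
        ≤ |(∫ t in E q, f (t, a q.2))
            - m (q.1 : ℕ) q.2 * f ((((q.1 : ℕ) : ℝ) * L, a q.2))|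
          + |m (q.1 : ℕ) q.2 * f ((((q.1 : ℕ) : ℝ) * L, a q.2))
            - ∫ p in I (q.1 : ℕ) ×ˢ S q.2, f p ∂μ| := abs_sub_le _ _ _
      _ = |(∫ t in E q, f (t, a q.2))
            - m (q.1 : ℕ) q.2 * f ((((q.1 : ℕ) : ℝ) * L, a q.2))|
          + |(∫ p in I (q.1 : ℕ) ×ˢ S q.2, f p ∂μ)
            - m (q.1 : ℕ) q.2 * f ((((q.1 : ℕ) : ℝ) * L, a q.2))| := by
            rw [abs_sub_comm (m (q.1 : ℕ) q.2 * f ((((q.1 : ℕ) : ℝ) * L, a q.2)))]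
      _ ≤ ε * m (q.1 : ℕ) q.2 + ε * m (q.1 : ℕ) q.2 := add_le_add hboundA hboundB
      _ = 2 * ε * m (q.1 : ℕ) q.2 := by ring
  -- sum up
  have hmsum : ∑ q : Fin N × Fin K, m (q.1 : ℕ) q.2 = T := by
    rw [Fintype.sum_prod_type]
    calc ∑ j : Fin N, ∑ i : Fin K, m (j : ℕ) i
        = ∑ _j : Fin N, L := Finset.sum_congr rfl (fun j _ => hsumK (j : ℕ) j.isLt)
      _ = T := by
          rw [Finset.sum_const, Finset.card_univ, Fintype.card_fin, nsmul_eq_mul, hNL]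
  rw [hLHS, hRHS, ← Finset.sum_sub_distrib]
  calc |∑ q : Fin N × Fin K,
        ((∫ t in E q, f (t, a q.2)) - ∫ p in I (q.1 : ℕ) ×ˢ S q.2, f p ∂μ)|
      ≤ ∑ q : Fin N × Fin K,
        |(∫ t in E q, f (t, a q.2)) - ∫ p in I (q.1 : ℕ) ×ˢ S q.2, f p ∂μ| :=
        Finset.abs_sum_le_sum_abs _ _
    _ ≤ ∑ q : Fin N × Fin K, 2 * ε * m (q.1 : ℕ) q.2 :=
        Finset.sum_le_sum (fun q _ => hterm q)
    _ = 2 * ε * ∑ q : Fin N × Fin K, m (q.1 : ℕ) q.2 := by rw [← Finset.mul_sum]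
    _ = 2 * ε * T := by rw [hmsum]
    _ = 2 * T * ε := by ring

end ChatteringAux

/-- Chattering lemma (deterministic form): every relaxed control `μ` on
`[0,T] × A` whose time-marginal is Lebesgue measure on `[0,T]` is the
stable (weak-*) limit of Dirac relaxed controls `δ_{u_n(t)}(da) dt`
associated with measurable strict controls `u_n : [0,T] → A`. -/
theorem chattering_lemma {A : Type*} [MetricSpace A] [CompactSpace A]
    [Nonempty A] [MeasurableSpace A] [BorelSpace A]
    (T : ℝ) (hT : 0 < T) (μ : Measure (ℝ × A))
    (hmarg : μ.map Prod.fst = volume.restrict (Set.Icc 0 T)) :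
    ∃ u : ℕ → ℝ → A, (∀ n, Measurable (u n)) ∧
      ∀ f : ℝ × A → ℝ, Continuous f →
        Tendsto (fun n => ∫ t in (0:ℝ)..T, f (t, u n t)) atTop
          (nhds (∫ p, f p ∂μ)) := by
  classical
  choose u hmeas hbound using exists_ctrl T hT μ hmarg
  refine ⟨u, hmeas, ?_⟩
  intro f hf
  rw [Metric.tendsto_atTop]
  intro ε hε
  set ε' := ε / (2 * T + 1) with hε'def
  have hε' : 0 < ε' := div_pos hε (by linarith)
  have hcomp : IsCompact ((Set.Icc (0:ℝ) T) ×ˢ (Set.univ : Set A)) :=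
    isCompact_Icc.prod isCompact_univ
  have huc : UniformContinuousOn f ((Set.Icc (0:ℝ) T) ×ˢ (Set.univ : Set A)) :=
    hcomp.uniformContinuousOn_of_continuous hf.continuousOn
  rw [Metric.uniformContinuousOn_iff_le] at huc
  obtain ⟨δ, hδ, hδf⟩ := huc ε' hε'
  obtain ⟨n₀, hn₀⟩ : ∃ n₀ : ℕ, max T 1 / δ ≤ (n₀ : ℝ) := exists_nat_ge _
  refine ⟨n₀, fun n hn => ?_⟩
  have hn1 : (0:ℝ) < (n:ℝ) + 1 := by positivity
  have hscale : max (T/((n:ℝ)+1)) (1/((n:ℝ)+1)) ≤ δ := by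
    have hcast : (n₀ : ℝ) ≤ (n:ℝ) + 1 := by
      have : (n₀ : ℝ) ≤ (n : ℝ) := by exact_mod_cast hn
      linarith
    have h1 : max T 1 / δ ≤ (n:ℝ) + 1 := le_trans hn₀ hcast
    have hδn : max T 1 ≤ δ * ((n:ℝ) + 1) := by
      rw [div_le_iff₀ hδ] at h1
      linarith [h1]
    apply max_le
    · rw [div_le_iff₀ hn1]
      calc T ≤ max T 1 := le_max_left _ _
        _ ≤ δ * ((n:ℝ) + 1) := hδn
    · rw [div_le_iff₀ hn1]
      calc (1:ℝ) ≤ max T 1 := le_max_right _ _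
        _ ≤ δ * ((n:ℝ) + 1) := hδn
  have hb := hbound n f hf ε' hε' ?_
  · rw [Real.dist_eq]
    calc |(∫ t in (0:ℝ)..T, f (t, u n t)) - ∫ p, f p ∂μ| ≤ 2 * T * ε' := hb
      _ < ε := by
        have heq : 2 * T * (ε / (2 * T + 1)) = (2 * T * ε) / (2 * T + 1) := by ring
        rw [hε'def, heq, div_lt_iff₀ (by linarith : (0:ℝ) < 2 * T + 1)]
        nlinarith
  · intro p hp q hq hpq
    have := hδf p hp q hq (le_trans hpq hscale)
    rwa [Real.dist_eq] at this
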